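/- arXiv:1708.03684 — 3 statements merged into one kernel-verified Lean document; each statement's English description precedes it below -/
import Mathlib

section
/- No-cloning theorem: for n ≥ 1, there is no unitary matrix U on ℂ^(2^n) ⊗ ℂ^(2^n) such that U(ψ ⊗ e₀) = ψ ⊗ ψ for every unit vector ψ ∈ ℂ^(2^n), where e₀ is the first standard basis vector of ℂ^(2^n). -/
theorem no_cloning (n : ℕ) (hn : 1 ≤ n) :
    ¬ ∃ U : Matrix (Fin (2 ^ n) × Fin (2 ^ n)) (Fin (2 ^ n) × Fin (2 ^ n)) ℂ,
        U ∈ Matrix.unitaryGroup (Fin (2 ^ n) × Fin (2 ^ n)) ℂ ∧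
        ∀ ψ : EuclideanSpace ℂ (Fin (2 ^ n)), ‖ψ‖ = 1 →
          U.mulVec (fun p => ψ p.1 * (Pi.single (0 : Fin (2 ^ n)) 1 : Fin (2 ^ n) → ℂ) p.2) =
            fun p => ψ p.1 * ψ p.2 := by
  rintro ⟨U, hU, hclone⟩
  have h2 : 2 ≤ 2 ^ n := by
    calc 2 = 2 ^ 1 := rfl
    _ ≤ 2 ^ n := Nat.pow_le_pow_right (by norm_num) hn
  haveI : NeZero (2 ^ n) := ⟨by positivity⟩
  have h01 : (0 : Fin (2 ^ n)) ≠ 1 := by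
    intro h
    have := congrArg Fin.val h
    rw [Fin.val_zero, Fin.val_one' (2 ^ n), Nat.mod_eq_of_lt h2] at this
    exact absurd this (by norm_num)
  set c : ℂ := (((Real.sqrt 2)⁻¹ : ℝ) : ℂ) with hc
  have hcnorm : ‖c‖ ^ 2 = 1 / 2 := by
    rw [hc, Complex.norm_real, Real.norm_eq_abs, abs_of_nonneg (by positivity)]
    rw [inv_pow, Real.sq_sqrt (by norm_num : (2:ℝ) ≥ 0)]
    norm_num
  set ψ1 : EuclideanSpace ℂ (Fin (2 ^ n)) := WithLp.toLp 2 (Pi.single 0 1) with hψ1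
  set ψ2 : EuclideanSpace ℂ (Fin (2 ^ n)) := WithLp.toLp 2 (fun i => if i = 0 ∨ i = 1 then c else 0) with hψ2
  have hn1 : ‖ψ1‖ = 1 := by
    rw [EuclideanSpace.norm_eq]
    have h : ∀ i : Fin (2 ^ n), ‖ψ1 i‖ ^ 2 = if i = 0 then (1:ℝ) else 0 := by
      intro i
      rw [hψ1]
      by_cases h : i = 0 <;> simp [h, Pi.single_apply]
    rw [Finset.sum_congr rfl (fun i _ => h i)]
    simp
  have hn2 : ‖ψ2‖ = 1 := by
    rw [EuclideanSpace.norm_eq]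
    have : ∀ i : Fin (2 ^ n), ‖ψ2 i‖ ^ 2
        = (if i = 0 then (1:ℝ)/2 else 0) + (if i = 1 then 1/2 else 0) := by
      intro i
      rw [hψ2]
      beta_reduce
      rw [WithLp.ofLp_toLp]
      rcases eq_or_ne i 0 with h | h
      · rw [if_pos (Or.inl h), if_pos h, if_neg (by rw [h]; exact h01), hcnorm]
        norm_num
      · rcases eq_or_ne i 1 with h' | h'
        · rw [if_pos (Or.inr h'), if_neg h, if_pos h', hcnorm]
          norm_num
        · rw [if_neg (by tauto), if_neg h, if_neg h']
          simp
    rw [Finset.sum_congr rfl (fun i _ => this i), Finset.sum_add_distrib]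
    simp [Finset.sum_ite_eq']
    norm_num
  have e1 := hclone ψ1 hn1
  have e2 := hclone ψ2 hn2
  -- inner product preservation
  set x : Fin (2^n) × Fin (2^n) → ℂ :=
    fun p => ψ1 p.1 * (Pi.single (0 : Fin (2 ^ n)) 1 : Fin (2 ^ n) → ℂ) p.2 with hx
  set y : Fin (2^n) × Fin (2^n) → ℂ :=
    fun p => ψ2 p.1 * (Pi.single (0 : Fin (2 ^ n)) 1 : Fin (2 ^ n) → ℂ) p.2 with hy
  have hpres : dotProduct (star (U.mulVec x)) (U.mulVec y) = dotProduct (star x) y := by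
    rw [Matrix.star_mulVec, Matrix.dotProduct_mulVec, Matrix.vecMul_vecMul,
      ← Matrix.star_eq_conjTranspose, (Matrix.mem_unitaryGroup_iff'.mp hU : star U * U = 1),
      Matrix.vecMul_one]
  rw [e1, e2] at hpres
  have din : dotProduct (star x) y = c := by
    simp only [hx, hy, dotProduct, Fintype.sum_prod_type, Pi.star_apply, star_mul',
      Pi.single_apply, hψ1, hψ2, WithLp.ofLp_toLp]
    simp [Finset.sum_ite_eq', apply_ite, Ne.symm h01]
    have : ∀ i : Fin (2 ^ n), (if i = 0 ∨ i = 1 then if i = 0 then c else 0 else 0)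
        = if i = 0 then c else 0 := by
      intro i; by_cases h : i = 0 <;> simp [h]
    rw [Finset.sum_congr rfl (fun i _ => this i)]
    simp
  have dout : dotProduct (star x)
      (fun p : Fin (2 ^ n) × Fin (2 ^ n) => ψ2 p.1 * ψ2 p.2) = c * c := by
    simp only [hx, dotProduct, Fintype.sum_prod_type, Pi.star_apply, star_mul',
      Pi.single_apply, hψ1, hψ2, WithLp.ofLp_toLp]
    simp [Finset.sum_ite_eq', apply_ite, Ne.symm h01]
    have key : ∀ a b : Fin (2 ^ n),
        (if b = 0 ∨ b = 1 then if a = 0 ∨ a = 1 then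
            if b = 0 then if a = 0 then c * c else 0 else 0 else 0 else 0)
        = if b = 0 then (if a = 0 then c * c else 0) else 0 := by
      intro a b
      by_cases hb : b = 0 <;> by_cases ha : a = 0 <;> simp [ha, hb]
    rw [Finset.sum_congr rfl (fun a _ => Finset.sum_congr rfl (fun b _ => key a b))]
    simp [Finset.sum_ite_eq']
  rw [dout, din] at hpres
  have : ((Real.sqrt 2)⁻¹ * (Real.sqrt 2)⁻¹ : ℝ) = ((Real.sqrt 2)⁻¹ : ℝ) := by
    have := hpres
    rw [hc, ← Complex.ofReal_mul] at this
    exact_mod_cast this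
  have hs : Real.sqrt 2 ^ 2 = 2 := Real.sq_sqrt (by norm_num)
  have hpos : 0 < Real.sqrt 2 := Real.sqrt_pos.mpr (by norm_num)
  have : Real.sqrt 2 = 1 := by
    field_simp at this
    nlinarith [this, hs, hpos]
  nlinarith [this, hs]
end

section
/- If U is unitary and maps ψ ⊗ e₀ to ψ ⊗ ψ and φ ⊗ e₀ to φ ⊗ φ for unit vectors ψ, φ, then the inner product ⟨φ, ψ⟩ equals 0 or 1. -/
open Matrix in
theorem cloning_inner_product (N : ℕ)
    (U : Matrix (Fin N × Fin N) (Fin N × Fin N) ℂ)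
    (hU : U ∈ Matrix.unitaryGroup (Fin N × Fin N) ℂ)
    (ψ φ e₀ : EuclideanSpace ℂ (Fin N))
    (hψ : ‖ψ‖ = 1) (hφ : ‖φ‖ = 1) (he : ‖e₀‖ = 1)
    (h1 : U.mulVec (fun p => ψ p.1 * e₀ p.2) = fun p => ψ p.1 * ψ p.2)
    (h2 : U.mulVec (fun p => φ p.1 * e₀ p.2) = fun p => φ p.1 * φ p.2) :
    (inner ℂ φ ψ : ℂ) = 0 ∨ (inner ℂ φ ψ : ℂ) = 1 := by
  set c : ℂ := inner ℂ φ ψ with hc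
  have hcdef : c = ∑ i, (starRingEnd ℂ) (φ i) * ψ i := by
    simp [hc, PiLp.inner_apply, RCLike.inner_apply, mul_comm]
  have hee : (∑ j, (starRingEnd ℂ) (e₀ j) * e₀ j) = 1 := by
    have : (inner ℂ e₀ e₀ : ℂ) = (‖e₀‖ : ℂ) ^ 2 := inner_self_eq_norm_sq_to_K e₀
    simp only [PiLp.inner_apply, RCLike.inner_apply, mul_comm (e₀ _)] at this
    rw [this, he]; norm_num
  -- unitarity preserves the dot product
  have hUU : U.conjTranspose * U = 1 := by
    have := hU.1
    simpa [Matrix.star_eq_conjTranspose] using this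
  have key : ∀ v w : (Fin N × Fin N) → ℂ,
      star (U.mulVec v) ⬝ᵥ U.mulVec w = star v ⬝ᵥ w := by
    intro v w
    rw [Matrix.star_mulVec, Matrix.dotProduct_mulVec, Matrix.vecMul_vecMul,
      hUU, Matrix.vecMul_one]
  have heq := key (fun p => φ p.1 * e₀ p.2) (fun p => ψ p.1 * e₀ p.2)
  rw [h1, h2] at heq
  have lhs : star (fun p : Fin N × Fin N => φ p.1 * φ p.2) ⬝ᵥ
      (fun p => ψ p.1 * ψ p.2) = c * c := by
    rw [hcdef]
    simp only [dotProduct, Pi.star_apply]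
    rw [Fintype.sum_prod_type, Finset.sum_mul_sum]
    refine Finset.sum_congr rfl fun i _ => Finset.sum_congr rfl fun j _ => ?_
    simp only [RCLike.star_def, _root_.map_mul]; ring
  have rhs : star (fun p : Fin N × Fin N => φ p.1 * e₀ p.2) ⬝ᵥ
      (fun p => ψ p.1 * e₀ p.2) = c := by
    have h3 : star (fun p : Fin N × Fin N => φ p.1 * e₀ p.2) ⬝ᵥ
        (fun p => ψ p.1 * e₀ p.2) =
        (∑ i, (starRingEnd ℂ) (φ i) * ψ i) * (∑ j, (starRingEnd ℂ) (e₀ j) * e₀ j) := by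
      simp only [dotProduct, Pi.star_apply]
      rw [Fintype.sum_prod_type, Finset.sum_mul_sum]
      refine Finset.sum_congr rfl fun i _ => Finset.sum_congr rfl fun j _ => ?_
      simp only [RCLike.star_def, _root_.map_mul]; ring
    rw [h3, hee, mul_one, hcdef]
  rw [lhs, rhs] at heq
  have : c * (c - 1) = 0 := by linear_combination heq
  rcases mul_eq_zero.mp this with h | h
  · exact Or.inl h
  · exact Or.inr (by linear_combination h)
end

section
/- One Grover iteration acts as a rotation: the map (d, u) ↦ ((1 − 1/2^{n−1})d + (2√(2^n−1)/2^n)u, −(2√(2^n−1)/2^n)d + (1 − 1/2^{n−1})u) is given by the rotation matrix [[cos θ, sin θ], [−sin θ, cos θ]] with sin θ = 2√(2^n − 1)/2^n; in particular (1 − 1/2^{n−1})² + (2√(2^n−1)/2^n)² = 1. -/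
theorem grover_iteration_rotation (n : ℕ) (hn : 1 ≤ n) :
    (∃ θ : ℝ,
        Real.sin θ = 2 * Real.sqrt (2 ^ n - 1) / 2 ^ n ∧
        Real.cos θ = 1 - 1 / 2 ^ (n - 1) ∧
        ∀ d u : ℝ,
          Matrix.mulVec !![Real.cos θ, Real.sin θ; -Real.sin θ, Real.cos θ] ![d, u] =
            ![(1 - 1 / 2 ^ (n - 1)) * d + 2 * Real.sqrt (2 ^ n - 1) / 2 ^ n * u,
              -(2 * Real.sqrt (2 ^ n - 1) / 2 ^ n) * d + (1 - 1 / 2 ^ (n - 1)) * u]) ∧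
    (1 - 1 / 2 ^ (n - 1)) ^ 2 + (2 * Real.sqrt (2 ^ n - 1) / 2 ^ n) ^ 2 = 1 := by
  obtain ⟨m, rfl⟩ : ∃ m, n = m + 1 := ⟨n - 1, (Nat.succ_pred_eq_of_pos hn).symm⟩
  set s : ℝ := 2 * Real.sqrt (2 ^ (m + 1) - 1) / 2 ^ (m + 1) with hs
  set c : ℝ := 1 - 1 / 2 ^ (m + 1 - 1) with hc
  have h2m : (1 : ℝ) ≤ 2 ^ (m + 1) := one_le_pow₀ (by norm_num)
  have hnn : (0 : ℝ) ≤ 2 ^ (m + 1) - 1 := by linarith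
  have hsq : Real.sqrt (2 ^ (m + 1) - 1) ^ 2 = 2 ^ (m + 1) - 1 := Real.sq_sqrt hnn
  have hm1 : (2 : ℝ) ^ (m + 1 - 1) = 2 ^ m := by norm_num
  have hpow : (2 : ℝ) ^ (m + 1) = 2 * 2 ^ m := by ring
  have hmpos : (0 : ℝ) < 2 ^ m := by positivity
  have key : c ^ 2 + s ^ 2 = 1 := by
    rw [hs, hc, hm1, div_pow, mul_pow, hsq, hpow]
    field_simp
    ring
  refine ⟨?_, key⟩
  have hcnn : 0 ≤ c := by
    rw [hc, hm1]
    have : (1 : ℝ) ≤ 2 ^ m := one_le_pow₀ (by norm_num)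
    have := hmpos
    rw [sub_nonneg, div_le_one hmpos]
    linarith
  have hs1 : s ^ 2 ≤ 1 := by nlinarith [sq_nonneg c]
  have habs : |s| ≤ 1 := abs_le.mpr ⟨by nlinarith, by nlinarith⟩
  refine ⟨Real.arcsin s, Real.sin_arcsin (neg_le_of_abs_le habs) (le_of_abs_le habs), ?_, ?_⟩
  · have : Real.cos (Real.arcsin s) = Real.sqrt (1 - s ^ 2) := Real.cos_arcsin s
    rw [this]
    have : (1 : ℝ) - s ^ 2 = c ^ 2 := by linarith
    rw [this, Real.sqrt_sq hcnn, hc]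
  · intro d u
    have hsin := Real.sin_arcsin (neg_le_of_abs_le habs) (le_of_abs_le habs)
    have hcos : Real.cos (Real.arcsin s) = c := by
      rw [Real.cos_arcsin s]
      have : (1 : ℝ) - s ^ 2 = c ^ 2 := by linarith
      rw [this, Real.sqrt_sq hcnn]
    funext i
    fin_cases i <;>
      simp [Matrix.mulVec, dotProduct, Fin.sum_univ_two, hsin, hcos] <;>
      ring
end
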